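/- If σ is a permutation of [n] with σ(n) = i, then applying the Foata transform to the inverse permutation σ⁻¹ yields a permutation φ with φ(n) = i. -/

import Mathlib

/-- Number of `r`-descents of a permutation `σ` of `[n]` (positions `i < n` with
`σ(i) ≥ σ(i+1) + r`), encoded on `Fin n`. -/
def rDesc (n r : ℕ) (σ : Equiv.Perm (Fin n)) : ℕ :=
  (Finset.univ.filter fun i : Fin n =>
    (if h : (i : ℕ) + 1 < n then ((σ ⟨(i : ℕ) + 1, h⟩ : Fin n) : ℕ) else n) + r ≤ (σ i : ℕ)).card

/-- Number of `r`-excedances of a permutation `σ` of `[n]` (positions `i ≤ n` with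
`σ(i) ≥ i + r`), encoded on `Fin n`. -/
def rExc (n r : ℕ) (σ : Equiv.Perm (Fin n)) : ℕ :=
  (Finset.univ.filter fun i : Fin n => (i : ℕ) + r ≤ (σ i : ℕ)).card

/-- The last value `σ(n)` of a permutation of `[n]` (as an element of `{1,…,n}`). -/
def lastVal (n : ℕ) (σ : Equiv.Perm (Fin n)) : ℕ :=
  if h : 0 < n then ((σ ⟨n - 1, Nat.sub_lt h Nat.one_pos⟩ : Fin n) : ℕ) + 1 else 0

/-- `Ar r n m k` = number of permutations of `[n]` with exactly `m` `r`-descents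
whose last value is `k`. -/
def Ar (r n m k : ℕ) : ℕ :=
  (Finset.univ.filter fun σ : Equiv.Perm (Fin n) => rDesc n r σ = m ∧ lastVal n σ = k).card

/-- The cycle of `σ` through `x`, written starting at `x`. -/
noncomputable def cycleListAt {n : ℕ} (σ : Equiv.Perm (Fin n)) (x : Fin n) : List (Fin n) :=
  (List.range (Function.minimalPeriod (⇑σ) x)).map fun j => (⇑σ)^[j] x

/-- The word of the Foata transform of `σ`: write `σ` in canonical cycle notation (each
cycle beginning with its largest element, cycles sorted by increasing largest element)
and erase the parentheses. -/
noncomputable def foataWord {n : ℕ} (σ : Equiv.Perm (Fin n)) : List (Fin n) :=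
  ((Finset.univ.filter fun x : Fin n =>
      ∀ j ∈ Finset.range n, (⇑σ)^[j] x ≤ x).sort (· ≤ ·)).flatMap (cycleListAt σ)

lemma flatMap_sort_getLast? {α β : Type*} [LinearOrder α] (s : Finset α) (f : α → List β)
    (a : α) (i : β) (ha : a ∈ s) (hmax : ∀ x ∈ s, x ≤ a)
    (hne : f a ≠ []) (hf : (f a).getLast? = some i) :
    ((s.sort (· ≤ ·)).flatMap f).getLast? = some i := by
  set l := s.sort (· ≤ ·) with hl
  have hlne : l ≠ [] := by
    intro hc
    have := (Finset.mem_sort (α := α) (· ≤ ·)).mpr ha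
    rw [← hl, hc] at this
    exact absurd this List.not_mem_nil
  have hsne : s.Nonempty := ⟨_, ha⟩
  have hmax' : s.max' hsne = a := le_antisymm (Finset.max'_le s hsne a hmax) (Finset.le_max' s a ha)
  have hlast : l.getLast hlne = a := by
    rw [List.getLast_eq_getElem, ← hmax', Finset.max'_eq_sorted_last]
  have hsplit : l = l.dropLast ++ [a] := by
    conv_lhs => rw [← List.dropLast_append_getLast hlne]
    rw [hlast]
  rw [hsplit, List.flatMap_append, List.getLast?_append_of_ne_nil, List.flatMap_singleton, hf]
  rw [List.flatMap_singleton]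
  exact hne


/-- If `σ(n) = i`, then the Foata transform `φ` of `σ⁻¹` satisfies `φ(n) = i`,
i.e. the last letter of the Foata word of `σ⁻¹` is `i`. -/
theorem stmt1 (n : ℕ) (σ : Equiv.Perm (Fin (n + 1))) (i : Fin (n + 1))
    (h : σ (Fin.last n) = i) :
    (foataWord σ⁻¹).getLast? = some i := by
  have hper : Function.IsPeriodicPt (⇑σ⁻¹) (orderOf σ⁻¹) (Fin.last n) := by
    unfold Function.IsPeriodicPt Function.IsFixedPt
    rw [Equiv.Perm.iterate_eq_pow, pow_orderOf_eq_one]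
    rfl
  have hppos : 0 < Function.minimalPeriod (⇑σ⁻¹) (Fin.last n) :=
    hper.minimalPeriod_pos (orderOf_pos σ⁻¹)
  obtain ⟨k, hk⟩ : ∃ k, Function.minimalPeriod (⇑σ⁻¹) (Fin.last n) = k + 1 :=
    ⟨_, (Nat.succ_pred_eq_of_pos hppos).symm⟩
  have hcyc : cycleListAt σ⁻¹ (Fin.last n) =
      ((List.range k).map fun j => (⇑σ⁻¹)^[j] (Fin.last n)) ++ [(⇑σ⁻¹)^[k] (Fin.last n)] := by
    rw [cycleListAt, hk, List.range_succ, List.map_append, List.map_singleton]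
  have hval : (⇑σ⁻¹)^[k] (Fin.last n) = i := by
    have h1 : (⇑σ⁻¹)^[k+1] (Fin.last n) = Fin.last n := by
      rw [← hk]; exact Function.isPeriodicPt_minimalPeriod (⇑σ⁻¹) (Fin.last n)
    have h2 : σ⁻¹ ((⇑σ⁻¹)^[k] (Fin.last n)) = Fin.last n := by
      rw [← Function.iterate_succ_apply' (⇑σ⁻¹) k]; exact h1
    have h3 : (⇑σ⁻¹)^[k] (Fin.last n) = σ (Fin.last n) := by
      have := congrArg (⇑σ) h2
      simpa using this
    rw [h3, h]
  rw [foataWord]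
  apply flatMap_sort_getLast? _ _ (Fin.last n)
  · simp only [Finset.mem_filter, Finset.mem_univ, true_and]
    intro j _
    exact Fin.le_last _
  · intro x _
    exact Fin.le_last x
  · rw [hcyc]; simp
  · rw [hcyc, List.getLast?_concat, hval]
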